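/- Let $p>2$ be a prime. Then the valuation ring $\mathbb{Z}_p$ of the $p$-adic valuation on $\mathbb{Q}_p$ equals the set of $x \in \mathbb{Q}_p$ such that there exists $y \in \mathbb{Q}_p$ with $y^2 = 1 + p x^2$. -/

import Mathlib

/-- Julia Robinson's existential definition: for a prime `p > 2`, the valuation ring
`ℤ_p ⊆ ℚ_p` is the set of `x` such that `1 + p * x ^ 2` is a square in `ℚ_p`. -/
theorem stmt_0 (p : ℕ) [Fact p.Prime] (hp : 2 < p) (x : ℚ_[p]) :
    ‖x‖ ≤ 1 ↔ ∃ y : ℚ_[p], y ^ 2 = 1 + (p : ℚ_[p]) * x ^ 2 := by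
  have hp1 : (1 : ℝ) < p := by exact_mod_cast hp.trans_le' one_le_two
  constructor
  · intro hx
    set x' : ℤ_[p] := ⟨x, hx⟩ with hx'
    set F : Polynomial ℤ_[p] := Polynomial.X ^ 2 - Polynomial.C (1 + p * x' ^ 2) with hF
    have h2 : ‖(2 : ℤ_[p])‖ = 1 := by
      refine le_antisymm (PadicInt.norm_le_one _) ?_
      by_contra h
      push_neg at h
      have := (PadicInt.norm_int_lt_one_iff_dvd (p := p) 2).mp (by exact_mod_cast h)
      have : (p : ℤ) ∣ 2 := this
      have := Int.le_of_dvd (by norm_num) this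
      omega
    have hderiv : F.derivative.eval 1 = 2 := by
      simp [hF, Polynomial.derivative_pow]
    have heval : F.eval 1 = -(p * x' ^ 2) := by simp [hF]
    have hnorm : ‖F.eval 1‖ < ‖F.derivative.eval 1‖ ^ 2 := by
      rw [heval, hderiv, h2, one_pow, norm_neg]
      calc ‖(p : ℤ_[p]) * x' ^ 2‖ ≤ ‖(p : ℤ_[p])‖ * 1 := by
            rw [norm_mul]
            gcongr
            exact PadicInt.norm_le_one _
        _ < 1 := by
            rw [mul_one, PadicInt.norm_p]
            exact inv_lt_one_of_one_lt₀ hp1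
    obtain ⟨z, hz, -⟩ := hensels_lemma hnorm
    refine ⟨(z : ℚ_[p]), ?_⟩
    have hz2 : z ^ 2 = 1 + p * x' ^ 2 := by
      have : z ^ 2 - (1 + p * x' ^ 2) = 0 := by simpa [hF] using hz
      exact sub_eq_zero.mp this
    have := congrArg (PadicInt.Coe.ringHom (p := p)) hz2
    push_cast at this
    have h3 : ((z ^ 2 : ℤ_[p]) : ℚ_[p]) = ((1 + p * x' ^ 2 : ℤ_[p]) : ℚ_[p]) := congrArg _ hz2
    push_cast at h3
    exact h3
  · rintro ⟨y, hy⟩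
    by_contra hx
    push_neg at hx
    have hx0 : x ≠ 0 := by rintro rfl; simp at hx; linarith
    have hnx : ‖x‖ = (p : ℝ) ^ (-x.valuation) := Padic.norm_eq_zpow_neg_valuation hx0
    have hvx : x.valuation < 0 := by
      by_contra h
      push_neg at h
      have : ‖x‖ ≤ 1 := by
        rw [hnx]
        exact zpow_le_one_of_nonpos₀ (le_of_lt hp1) (by omega)
      linarith
    have hpx : ‖(p : ℚ_[p]) * x ^ 2‖ = (p : ℝ) ^ (-(1 + 2 * x.valuation)) := by
      rw [norm_mul, norm_pow, Padic.norm_p, hnx]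
      rw [← zpow_natCast ((p:ℝ) ^ (-x.valuation)) 2, ← zpow_mul, ← zpow_neg_one, ← zpow_add₀ (by positivity)]
      ring_nf
    have hpx1 : 1 < ‖(p : ℚ_[p]) * x ^ 2‖ := by
      rw [hpx]
      apply one_lt_zpow₀ hp1
      omega
    have hsum : ‖(1 : ℚ_[p]) + (p : ℚ_[p]) * x ^ 2‖ = ‖(p : ℚ_[p]) * x ^ 2‖ := by
      rw [Padic.add_eq_max_of_ne (by rw [norm_one]; exact ne_of_lt hpx1)]
      rw [norm_one]
      exact max_eq_right hpx1.le
    have hyn : ‖y‖ ^ 2 = ‖(p : ℚ_[p]) * x ^ 2‖ := by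
      rw [← norm_pow, hy, hsum]
    have hy0 : y ≠ 0 := by
      rintro rfl
      rw [norm_zero] at hyn
      nlinarith
    have hny : ‖y‖ = (p : ℝ) ^ (-y.valuation) := Padic.norm_eq_zpow_neg_valuation hy0
    have : (p : ℝ) ^ (-(2 * y.valuation)) = (p : ℝ) ^ (-(1 + 2 * x.valuation)) := by
      rw [← hpx, ← hsum, ← hy, norm_pow, hny, ← zpow_natCast ((p:ℝ) ^ (-y.valuation)) 2, ← zpow_mul]
      ring_nf
    have := zpow_right_injective₀ (by positivity) (ne_of_gt hp1) this
    omega
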